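/- Let R be a commutative Artinian local ring with finite residue field which is injective as a module over itself (i.e., a zero-dimensional Gorenstein local ring with finite residue field). Then there exists an isomorphism of R-modules R ≅ Hom_ℤ(R, ℚ/ℤ), where the R-module structure on Hom_ℤ(R, ℚ/ℤ) is given by (r·f)(x) = f(rx). -/

import Mathlib

open IsLocalRing

section FiniteRing

variable {R : Type*} [CommRing R]

private lemma aux_finite_of_sub_quot {M : Type*} [AddCommGroup M] [Module R M]
    (N : Submodule R M) (h1 : Finite N) (h2 : Finite (M ⧸ N)) : Finite M := by
  have h1' : Finite N.toAddSubgroup := h1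
  have h2' : Finite (M ⧸ N.toAddSubgroup) := h2
  exact Finite.of_equiv _
    (AddSubgroup.addGroupEquivQuotientProdAddSubgroup (s := N.toAddSubgroup)).symm

private lemma fin_of_artinian_vs (K : Type*) [Field K] [Finite K] (V : Type*)
    [AddCommGroup V] [Module K V] [IsArtinian K V] : Finite V := by
  have hli := Module.Basis.ofVectorSpaceIndex.linearIndependent K V
  have hfin : (Module.Basis.ofVectorSpaceIndex K V).Finite :=
    IsArtinian.finite_of_linearIndependent hli
  haveI : Module.Finite K V := by
    refine ⟨Submodule.fg_def.mpr ⟨_, hfin, ?_⟩⟩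
    rw [← Module.Basis.range_ofVectorSpace K V]
    exact (Module.Basis.ofVectorSpace K V).span_eq
  exact Module.finite_of_finite K

private lemma aux_finite_quot_smul_top [IsLocalRing R] [Finite (ResidueField R)]
    (M : Type*) [AddCommGroup M] [Module R M] [IsArtinian R M] :
    Finite (M ⧸ (maximalIdeal R • ⊤ : Submodule R M)) := by
  letI modK : Module (ResidueField R) (M ⧸ (maximalIdeal R • ⊤ : Submodule R M)) :=
    (Module.isTorsionBySet_quotient_ideal_smul M (maximalIdeal R)).module
  haveI towerK : IsScalarTower R (ResidueField R)
      (M ⧸ (maximalIdeal R • ⊤ : Submodule R M)) := by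
    refine ⟨fun r k q => ?_⟩
    obtain ⟨a, rfl⟩ := Ideal.Quotient.mk_surjective k
    obtain ⟨x, rfl⟩ := Submodule.Quotient.mk_surjective _ q
    have h1 : r • (Ideal.Quotient.mk (maximalIdeal R) a) =
        Ideal.Quotient.mk (maximalIdeal R) (r * a) := by
      rw [Algebra.smul_def, Ideal.Quotient.algebraMap_eq, ← map_mul]
    erw [h1, Module.Quotient.mk_smul_mk, Module.Quotient.mk_smul_mk, mul_smul]
  haveI artK : IsArtinian (ResidueField R) (M ⧸ (maximalIdeal R • ⊤ : Submodule R M)) :=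
    isArtinian_of_tower R inferInstance
  exact fin_of_artinian_vs (ResidueField R) (M ⧸ (maximalIdeal R • ⊤ : Submodule R M))

private lemma aux_finite_ring (R : Type*) [CommRing R] [IsArtinianRing R] [IsLocalRing R]
    [Finite (ResidueField R)] : Finite R := by
  obtain ⟨n, hn⟩ := IsArtinianRing.isNilpotent_jacobson_bot (R := R)
  rw [jacobson_eq_maximalIdeal ⊥ bot_ne_top] at hn
  replace hn : maximalIdeal R ^ n = ⊥ := by simpa using hn
  have step : ∀ j : ℕ, Finite ((maximalIdeal R ^ (j + 1) : Ideal R)) →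
      Finite ((maximalIdeal R ^ j : Ideal R)) := by
    intro j hj
    set N : Submodule R ((maximalIdeal R ^ j : Ideal R)) :=
      Submodule.comap (maximalIdeal R ^ j : Ideal R).subtype (maximalIdeal R ^ (j + 1)) with hN
    have h1 : Finite N := by
      have hle : (maximalIdeal R ^ (j + 1) : Ideal R) ≤ maximalIdeal R ^ j :=
        Ideal.pow_le_pow_right (Nat.le_succ j)
      exact Finite.of_equiv _ (Submodule.comapSubtypeEquivOfLe hle).symm.toEquiv
    have h2 : Finite (((maximalIdeal R ^ j : Ideal R)) ⧸ N) := by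
      have key : (maximalIdeal R • ⊤ : Submodule R ((maximalIdeal R ^ j : Ideal R))) ≤ N := by
        refine Submodule.smul_le.mpr ?_
        rintro a ha x -
        show a • (x : R) ∈ maximalIdeal R ^ (j + 1)
        rw [smul_eq_mul, pow_succ']
        exact Ideal.mul_mem_mul ha x.2
      haveI := aux_finite_quot_smul_top (R := R) ((maximalIdeal R ^ j : Ideal R))
      refine Finite.of_surjective
        (Submodule.mapQ (maximalIdeal R • ⊤) N LinearMap.id (by simpa using key)) ?_
      intro x
      obtain ⟨y, rfl⟩ := Submodule.Quotient.mk_surjective _ x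
      exact ⟨Submodule.Quotient.mk y, by simp [Submodule.mapQ_apply]⟩
    exact aux_finite_of_sub_quot N h1 h2
  have main : ∀ i : ℕ, Finite ((maximalIdeal R ^ (n - i) : Ideal R)) := by
    intro i
    induction i with
    | zero =>
      rw [Nat.sub_zero, hn]
      exact inferInstanceAs (Finite ((⊥ : Ideal R)))
    | succ i ih =>
      rcases le_or_gt n i with h | h
      · have e : n - (i + 1) = n - i := by omega
        rw [e]; exact ih
      · have e : n - i = (n - (i + 1)) + 1 := by omega
        rw [e] at ih
        exact step _ ih
  have := main n
  rw [Nat.sub_self, pow_zero, Ideal.one_eq_top] at this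
  exact Finite.of_equiv _ (Submodule.topEquiv (R := R) (M := R)).toEquiv

end FiniteRing

section Socle

variable (R : Type*) [CommRing R] [IsLocalRing R]

/-- The socle of `R`: elements killed by the maximal ideal. -/
private def SocIdeal : Ideal R where
  carrier := {z | ∀ a ∈ maximalIdeal R, a * z = 0}
  add_mem' := fun {x y} hx hy a ha => by rw [mul_add, hx a ha, hy a ha, add_zero]
  zero_mem' := fun a _ => mul_zero a
  smul_mem' := fun c x hx a ha => by
    rw [smul_eq_mul, ← mul_assoc, mul_comm a c, mul_assoc, hx a ha, mul_zero]

variable {R}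

private lemma socle_simple [Module.Injective R R] {x y : R} (hx : x ∈ SocIdeal R)
    (hx0 : x ≠ 0) (hy : y ∈ SocIdeal R) (hy0 : y ≠ 0) : y ∈ Ideal.span {x} := by
  by_contra hmem
  set I := Ideal.span {x} with hI
  set J := Ideal.span {y} with hJ
  have hinj : Function.Injective ((Submodule.subtype I).coprod (Submodule.subtype J)) := by
    rw [injective_iff_map_eq_zero]
    rintro ⟨⟨a, ha⟩, ⟨b, hb⟩⟩ hab
    simp only [LinearMap.coprod_apply, Submodule.coe_subtype] at hab
    obtain ⟨c, hc⟩ := Ideal.mem_span_singleton'.mp ha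
    obtain ⟨d, hd⟩ := Ideal.mem_span_singleton'.mp hb
    have hbz : b = 0 := by
      by_cases hd' : IsUnit d
      · exfalso
        apply hmem
        obtain ⟨u, hu⟩ := hd'
        refine Ideal.mem_span_singleton'.mpr ⟨-(((u⁻¹ : Rˣ) : R) * c), ?_⟩
        have h1 : ((u : R)) * y = -(c * x) := by
          rw [hu, hd, hc]
          linear_combination hab
        have := congrArg (fun t => ((u⁻¹ : Rˣ) : R) * t) h1
        simp only [← mul_assoc] at this
        rw [Units.inv_mul, one_mul] at this
        rw [this]
        ring
      · have hdm : d ∈ maximalIdeal R := (mem_maximalIdeal d).mpr hd'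
        rw [← hd]
        exact hy d hdm
    have haz : a = 0 := by rw [hbz, add_zero] at hab; exact hab
    refine Prod.ext ?_ ?_ <;> ext <;> simp [haz, hbz]
  obtain ⟨h, hh⟩ := Module.Injective.out
    ((Submodule.subtype I).coprod (Submodule.subtype J)) hinj
    ((Submodule.subtype I).comp (LinearMap.fst R I J))
  set s := h 1 with hs
  have happly : ∀ z : R, h z = z * s := by
    intro z
    conv_lhs => rw [← mul_one z, ← smul_eq_mul]
    rw [map_smul, smul_eq_mul, ← hs]
  have hx' : x * s = x := by
    have := hh (⟨x, Ideal.mem_span_singleton_self x⟩, 0)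
    simpa [happly] using this
  have hy' : y * s = 0 := by
    have := hh (0, ⟨y, Ideal.mem_span_singleton_self y⟩)
    simpa [happly] using this
  have hsm : s ∈ maximalIdeal R := by
    rw [mem_maximalIdeal]
    intro hu
    obtain ⟨v, hv⟩ := hu.exists_right_inv
    apply hy0
    calc y = y * (s * v) := by rw [hv, mul_one]
    _ = (y * s) * v := by ring
    _ = 0 := by rw [hy', zero_mul]
  have h1s : (1 : R) - s ∈ maximalIdeal R := by
    rw [mem_maximalIdeal]
    intro hu
    obtain ⟨v, hv⟩ := hu.exists_right_inv
    apply hx0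
    calc x = x * (((1 : R) - s) * v) := by rw [hv, mul_one]
    _ = (x - x * s) * v := by ring
    _ = 0 := by rw [hx', sub_self, zero_mul]
  have hone : (1 : R) ∈ maximalIdeal R := by
    have := add_mem h1s hsm
    simpa using this
  exact (maximalIdeal.isMaximal R).ne_top (Ideal.eq_top_of_isUnit_mem _ hone isUnit_one)

private lemma exists_socle_elem [IsArtinianRing R] {r : R} (hr : r ≠ 0) :
    ∃ w : R, w ≠ 0 ∧ w ∈ SocIdeal R ∧ w ∈ Ideal.span {r} := by
  classical
  obtain ⟨n, hn⟩ := IsArtinianRing.isNilpotent_jacobson_bot (R := R)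
  rw [jacobson_eq_maximalIdeal ⊥ bot_ne_top] at hn
  replace hn : maximalIdeal R ^ n = ⊥ := by simpa using hn
  have hP : ∃ t : ℕ, ∀ z ∈ (maximalIdeal R ^ t : Ideal R), z * r = 0 := by
    refine ⟨n, fun z hz => ?_⟩
    rw [hn, Submodule.mem_bot] at hz
    rw [hz, zero_mul]
  have hj0 : Nat.find hP ≠ 0 := by
    intro h
    have hspec := Nat.find_spec hP
    rw [h] at hspec
    exact hr (by simpa using hspec 1 (by simp [Ideal.one_eq_top]))
  have hlt : Nat.find hP - 1 < Nat.find hP := by omega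
  have hnot := Nat.find_min hP hlt
  push_neg at hnot
  obtain ⟨z, hz, hzr⟩ := hnot
  refine ⟨z * r, hzr, ?_, Ideal.mem_span_singleton'.mpr ⟨z, rfl⟩⟩
  intro a ha
  have hmem : a * z ∈ (maximalIdeal R ^ Nat.find hP : Ideal R) := by
    have e : Nat.find hP = (Nat.find hP - 1) + 1 := by omega
    rw [e, pow_succ']
    exact Ideal.mul_mem_mul ha hz
  have := Nat.find_spec hP (a * z) hmem
  rw [← mul_assoc]
  exact this

end Socle

section Counting

private lemma ratcast_zsmul_one (n : ℤ) : ((n • (1 : ℚ) : ℚ) : ℝ) = n • (1 : ℝ) := by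
  rw [zsmul_eq_mul, zsmul_eq_mul]
  push_cast
  ring

/-- The natural injection `ℚ/ℤ → ℝ/ℤ`. -/
private noncomputable def qmap : AddCircle (1 : ℚ) →+ AddCircle (1 : ℝ) :=
  QuotientAddGroup.map _ _ (Rat.castHom ℝ).toAddMonoidHom (by
    intro x hx
    obtain ⟨n, hn⟩ := AddSubgroup.mem_zmultiples_iff.mp hx
    refine AddSubgroup.mem_zmultiples_iff.mpr ⟨n, ?_⟩
    show n • (1 : ℝ) = ((x : ℚ) : ℝ)
    rw [← hn, ratcast_zsmul_one])

private lemma qmap_injective : Function.Injective qmap := by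
  intro a b h
  induction a using QuotientAddGroup.induction_on with
  | H x =>
  induction b using QuotientAddGroup.induction_on with
  | H y =>
  rw [show (↑x : AddCircle (1 : ℚ)) = QuotientAddGroup.mk x from rfl,
    show (↑y : AddCircle (1 : ℚ)) = QuotientAddGroup.mk y from rfl,
    qmap, QuotientAddGroup.map_mk, QuotientAddGroup.map_mk] at h
  rw [QuotientAddGroup.eq] at h
  obtain ⟨n, hn⟩ := AddSubgroup.mem_zmultiples_iff.mp h
  have hn' : n • (1 : ℝ) = -((x : ℝ)) + ((y : ℝ)) := hn
  refine QuotientAddGroup.eq.mpr (AddSubgroup.mem_zmultiples_iff.mpr ⟨n, ?_⟩)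
  apply Rat.cast_injective (α := ℝ)
  show ((n • (1 : ℚ) : ℚ) : ℝ) = ((-x + y : ℚ) : ℝ)
  rw [ratcast_zsmul_one, hn']
  push_cast
  ring

private noncomputable def charToMonoidHom {A : Type*} [AddCommGroup A]
    (c : CharacterModule A) : Multiplicative A →* ℂˣ :=
  MonoidHom.mk' (fun a => Circle.toUnits (AddCircle.toCircle (qmap (c a.toAdd))))
    (by
      intro a b
      have h1 : c ((a * b).toAdd) = c a.toAdd + c b.toAdd := map_add c _ _
      simp only [h1, map_add, AddCircle.toCircle_add, map_mul])

private lemma charToMonoidHom_injective {A : Type*} [AddCommGroup A] :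
    Function.Injective (charToMonoidHom (A := A)) := by
  intro c1 c2 h
  apply CharacterModule.ext
  intro a
  have h1 := DFunLike.congr_fun h (Multiplicative.ofAdd a)
  simp only [charToMonoidHom, MonoidHom.mk'_apply] at h1
  have h2 : ((AddCircle.toCircle (qmap (c1 a)) : Circle) : ℂ)
      = ((AddCircle.toCircle (qmap (c2 a)) : Circle) : ℂ) := by
    have := congrArg (fun u : ℂˣ => (u : ℂ)) h1
    simpa using this
  exact qmap_injective (AddCircle.injective_toCircle one_ne_zero (Circle.coe_injective h2))

private lemma char_finite {A : Type*} [AddCommGroup A] [Finite A] :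
    Finite (CharacterModule A) ∧ Nat.card (CharacterModule A) ≤ Nat.card A := by
  haveI : NeZero ((Monoid.exponent (Multiplicative A) : ℂ)) :=
    ⟨Nat.cast_ne_zero.mpr Monoid.exponent_ne_zero_of_finite⟩
  obtain ⟨e⟩ := CommGroup.monoidHom_mulEquiv_of_hasEnoughRootsOfUnity (Multiplicative A) ℂ
  haveI : Finite (Multiplicative A →* ℂˣ) := Finite.of_equiv _ e.toEquiv.symm
  haveI : Finite (CharacterModule A) :=
    Finite.of_injective _ (charToMonoidHom_injective (A := A))
  refine ⟨inferInstance, ?_⟩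
  calc Nat.card (CharacterModule A)
      ≤ Nat.card (Multiplicative A →* ℂˣ) :=
        Nat.card_le_card_of_injective _ (charToMonoidHom_injective (A := A))
    _ = Nat.card (Multiplicative A) := Nat.card_congr e.toEquiv
    _ = Nat.card A := rfl

end Counting

/-- Let `R` be a commutative Artinian local ring with finite residue field
which is injective as a module over itself (i.e. a zero-dimensional Gorenstein local ring with
finite residue field).  Then there is an isomorphism of `R`-modules
`R ≅ Hom_ℤ(R, ℚ/ℤ)`, where `Hom_ℤ(R, ℚ/ℤ)` is the Pontryagin dual `CharacterModule R`
(with `R`-module structure `(r • f) x = f (r • x)`). -/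
theorem stark_systems_stmt5 (R : Type*) [CommRing R] [IsArtinianRing R] [IsLocalRing R]
    [Finite (IsLocalRing.ResidueField R)] [Module.Injective R R] :
    Nonempty (R ≃ₗ[R] CharacterModule R) := by
  classical
  haveI hRfin : Finite R := aux_finite_ring R
  obtain ⟨x0, hx00, hx0S, -⟩ := exists_socle_elem (R := R) (one_ne_zero)
  obtain ⟨f0, hf0⟩ := CharacterModule.exists_character_apply_ne_zero_of_ne_zero hx00
  set σ : R →ₗ[R] CharacterModule R := LinearMap.toSpanSingleton R (CharacterModule R) f0
    with hσdef
  have hσ : Function.Injective σ := by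
    rw [injective_iff_map_eq_zero]
    intro r h0
    by_contra hr
    obtain ⟨w, hw0, hwS, hwr⟩ := exists_socle_elem (R := R) hr
    have hx0w : x0 ∈ Ideal.span {w} := socle_simple hwS hw0 hx0S hx00
    obtain ⟨c, hc⟩ := Ideal.mem_span_singleton'.mp hx0w
    obtain ⟨z, hz⟩ := Ideal.mem_span_singleton'.mp hwr
    apply hf0
    have hx0eq : x0 = r • (c * z) := by
      rw [smul_eq_mul, ← hc, ← hz]; ring
    rw [hx0eq]
    have h1 : (r • f0) (c * z) = 0 := by
      have : σ r = 0 := h0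
      rw [hσdef] at this
      rw [← LinearMap.toSpanSingleton_apply R (CharacterModule R) f0 r, this]
      rfl
    rw [← h1]
    rfl
  obtain ⟨hDfin, hcard⟩ := char_finite (A := R)
  exact ⟨LinearEquiv.ofBijective σ (hσ.bijective_of_nat_card_le hcard)⟩
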